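/- Let m₁,…,m_r, n be positive integers with m = m₁+⋯+m_r ≤ n, and let h = max{k : m_i n/(k-1) ≥ ⌈m_i n/k⌉ for all i ∈ [r]}. Then the equitable chromatic number of K_{m₁,…,m_r} × Kₙ equals Σᵢ ⌈m_i n / h⌉. -/

import Mathlib

open SimpleGraph

/-- Kronecker (tensor) product of simple graphs. -/
def kronecker {α β : Type*} (G : SimpleGraph α) (H : SimpleGraph β) :
    SimpleGraph (α × β) where
  Adj p q := G.Adj p.1 q.1 ∧ H.Adj p.2 q.2
  symm := ⟨fun _ _ h => ⟨h.1.symm, h.2.symm⟩⟩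
  loopless := ⟨fun _ h => G.loopless.irrefl _ h.1⟩

/-- `G` admits an equitable `k`-coloring. -/
def EquitablyColorable {V : Type*} [Fintype V] (G : SimpleGraph V) (k : ℕ) : Prop :=
  ∃ f : G.Coloring (Fin k), ∀ i j : Fin k,
    (Finset.univ.filter fun v => f v = i).card ≤
      (Finset.univ.filter fun v => f v = j).card + 1

/-- The equitable chromatic number: the least `k` for which `G` has an
equitable `k`-coloring. -/
noncomputable def equitableChromaticNumber {V : Type*} [Fintype V]
    (G : SimpleGraph V) : ℕ :=
  sInf {k | EquitablyColorable G k}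

/- auxiliary lemmas -/
lemma EqC.div_eq_iff (x q j : ℕ) (hq : 0 < q) : x / q = j ↔ j*q ≤ x ∧ x < j*q + q := by
  constructor
  · rintro rfl
    refine ⟨Nat.div_mul_le_self x q, ?_⟩
    have h1 := Nat.div_add_mod x q
    have h2 := Nat.mod_lt x hq
    have h3 : (x/q)*q = q*(x/q) := by ring
    omega
  · rintro ⟨h1, h2⟩
    exact Nat.div_eq_of_lt_le h1 (by rw [add_mul]; omega)

lemma EqC.ceil_le (a k t : ℕ) (ht : a ≤ k * (t+1)) : (a + t)/(t+1) ≤ k := by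
  rw [Nat.div_le_iff_le_mul_add_pred (by omega), mul_comm]
  omega

lemma EqC.le_mul_ceil (a t : ℕ) (ht : 0 < t) : a ≤ t * ((a + (t - 1))/t) := by
  have h1 := Nat.div_add_mod (a + (t - 1)) t
  have h2 := Nat.mod_lt (a + (t - 1)) ht
  omega

lemma EqC.ceil_anti (a c d : ℕ) (hc : 0 < c) (hcd : c ≤ d) :
    (a + (d - 1))/d ≤ (a + (c - 1))/c := by
  have h1 : a ≤ c * ((a + (c - 1))/c) := EqC.le_mul_ceil a c hc
  rw [Nat.div_le_iff_le_mul_add_pred (by omega)]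
  calc a + (d - 1) ≤ c * ((a + (c - 1))/c) + (d - 1) := by omega
  _ ≤ d * ((a + (c - 1))/c) + (d-1) := by
      have := Nat.mul_le_mul_right ((a + (c - 1))/c) hcd
      omega

lemma EqC.div_lt (x q j : ℕ) (hq : 0 < q) (hx : x < j * q) : x / q < j := by
  rw [Nat.div_lt_iff_lt_mul hq]; exact hx

def EqC.part (h e x : ℕ) : ℕ := if x < e * h then x / h else e + (x - e * h) / (h - 1)

lemma EqC.part_lt (h e d x : ℕ) (hh2 : 2 ≤ h) (hx : x < e*h + d*(h-1)) :
    EqC.part h e x < e + d := by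
  unfold EqC.part
  split
  case isTrue hlt => have := EqC.div_lt x h e (by omega) hlt; omega
  case isFalse hlt =>
    have : (x - e*h) / (h-1) < d := EqC.div_lt _ _ _ (by omega) (by omega)
    omega

lemma EqC.part_filter_card (h e d j : ℕ) (hh2 : 2 ≤ h) (hj : j < e + d) :
    ((Finset.range (e*h + d*(h-1))).filter (fun x => EqC.part h e x = j)).card
      = if j < e then h else h - 1 := by
  split
  case isTrue hje =>
    have heq : (Finset.range (e*h + d*(h-1))).filter (fun x => EqC.part h e x = j)
        = Finset.Ico (j*h) (j*h + h) := by
      ext x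
      simp only [Finset.mem_filter, Finset.mem_range, Finset.mem_Ico]; simp only [EqC.part]
      constructor
      · rintro ⟨hxa, hpx⟩
        by_cases hlt : x < e * h
        · rw [if_pos hlt, EqC.div_eq_iff x h j (by omega)] at hpx
          omega
        · rw [if_neg hlt] at hpx
          have : e ≤ e + (x - e*h)/(h-1) := Nat.le_add_right _ _
          omega
      · rintro ⟨h1, h2⟩
        have hjh : (j+1)*h ≤ e*h := Nat.mul_le_mul_right h (by omega)
        have hlt : x < e * h := by rw [add_mul] at hjh; omega
        rw [if_pos hlt, EqC.div_eq_iff x h j (by omega)]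
        refine ⟨by omega, by omega, by omega⟩
    rw [heq, Nat.card_Ico]; omega
  case isFalse hje =>
    have hde : j - e < d := by omega
    have heq : (Finset.range (e*h + d*(h-1))).filter (fun x => EqC.part h e x = j)
        = Finset.Ico (e*h + (j-e)*(h-1)) (e*h + (j-e)*(h-1) + (h-1)) := by
      ext x
      simp only [Finset.mem_filter, Finset.mem_range, Finset.mem_Ico]; simp only [EqC.part]
      constructor
      · rintro ⟨hxa, hpx⟩
        by_cases hlt : x < e * h
        · rw [if_pos hlt] at hpx
          have := EqC.div_lt x h e (by omega) hlt
          omega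
        · rw [if_neg hlt] at hpx
          have hpx' : (x - e*h) / (h-1) = j - e := by omega
          rw [EqC.div_eq_iff _ (h-1) (j-e) (by omega)] at hpx'
          omega
      · rintro ⟨h1, h2⟩
        have hlt : ¬ (x < e * h) := by omega
        rw [if_neg hlt]
        have : (x - e*h) / (h-1) = j - e := by
          rw [EqC.div_eq_iff _ (h-1) (j-e) (by omega)]
          omega
        constructor
        · have hjd : (j-e+1)*(h-1) ≤ d*(h-1) := Nat.mul_le_mul_right _ (by omega)
          rw [add_mul] at hjd
          omega
        · omega
    rw [heq, Nat.card_Ico]; omega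

lemma EqC.block_card {r n : ℕ} (m : Fin r → ℕ) (i : Fin r) (P : ℕ → Prop) [DecidablePred P]
    (hn : 0 < n) :
    ((Finset.univ : Finset ((Σ i, Fin (m i)) × Fin n)).filter
        (fun v => v.1.1 = i ∧ P (v.1.2.val * n + v.2.val))).card
      = ((Finset.range (m i * n)).filter (fun y => P y)).card := by
  refine Finset.card_bij' (fun v _ => v.1.2.val * n + v.2.val)
    (fun y hy => ((⟨i, ⟨y / n, ?_⟩⟩, ⟨y % n, Nat.mod_lt _ hn⟩)))
    ?_ ?_ ?_ ?_
  · simp only [Finset.mem_filter, Finset.mem_range] at hy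
    rw [Nat.div_lt_iff_lt_mul hn]
    exact hy.1
  · rintro ⟨⟨i1, pp⟩, qq⟩ ha
    simp only [Finset.mem_filter, Finset.mem_univ, true_and] at ha
    simp only [Finset.mem_filter, Finset.mem_range]
    obtain ⟨hi1, hP⟩ := ha
    refine ⟨?_, hP⟩
    subst hi1
    have h1 : pp.val + 1 ≤ m i1 := pp.isLt
    have h2 : qq.val < n := qq.isLt
    calc pp.val * n + qq.val < pp.val * n + n := by omega
    _ = (pp.val + 1) * n := by ring
    _ ≤ m i1 * n := Nat.mul_le_mul_right n h1
  · intro y hy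
    simp only [Finset.mem_filter, Finset.mem_range] at hy
    simp only [Finset.mem_filter, Finset.mem_univ, true_and]
    have h1 := Nat.div_add_mod y n
    have h3 : (y/n)*n = n*(y/n) := by ring
    have h4 : (y / n) * n + y % n = y := by omega
    rw [h4]
    exact hy.2
  · rintro ⟨⟨i1, pp⟩, qq⟩ ha
    simp only [Finset.mem_filter, Finset.mem_univ, true_and] at ha
    obtain ⟨hi1, hP⟩ := ha
    subst hi1
    have hdiv : (pp.val * n + qq.val) / n = pp.val := by
      rw [EqC.div_eq_iff _ n _ hn]
      exact ⟨le_refl _ |>.trans (Nat.le_add_right _ _), by have := qq.isLt; omega⟩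
    have hmod : (pp.val * n + qq.val) % n = qq.val := by
      have h1 := Nat.div_add_mod (pp.val * n + qq.val) n
      have h3 : (pp.val * n + qq.val)/n * n = n * ((pp.val * n + qq.val)/n) := by ring
      rw [hdiv] at h3 h1
      have h4 : n * pp.val = pp.val * n := by ring
      omega
    ext <;> simp [hdiv, hmod]
  · intro y hy
    simp only [Finset.mem_filter, Finset.mem_range] at hy
    have h1 := Nat.div_add_mod y n
    have h3 : (y/n)*n = n*(y/n) := by ring
    dsimp only
    omega

lemma EqC.exists_partial (c : ℕ → ℕ) (N t : ℕ) (ht : t < ∑ x ∈ Finset.range N, c x) :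
    ∃ x < N, (∑ y ∈ Finset.range x, c y) ≤ t ∧ t < (∑ y ∈ Finset.range x, c y) + c x := by
  induction N with
  | zero => simp at ht
  | succ N ih =>
    rw [Finset.sum_range_succ] at ht
    by_cases h' : t < ∑ y ∈ Finset.range N, c y
    · obtain ⟨x, hx, h1, h2⟩ := ih h'
      exact ⟨x, by omega, h1, h2⟩
    · exact ⟨N, by omega, by omega, by omega⟩

lemma EqC.o_step (c : ℕ → ℕ) {x y : ℕ} (hxy : x < y) :
    (∑ z ∈ Finset.range x, c z) + c x ≤ ∑ z ∈ Finset.range y, c z := by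
  rw [← Finset.sum_range_succ]
  exact Finset.sum_le_sum_of_subset (Finset.range_subset_range.2 hxy)

lemma EqC.upper {r n h : ℕ} (m : Fin r → ℕ) (hm : ∀ i, 0 < m i) (hn : 0 < n)
    (h2 : 2 ≤ h)
    (hcond : ∀ i, (h - 1) * ((m i * n + (h - 1)) / h) ≤ m i * n) :
    EquitablyColorable
      (kronecker (completeMultipartiteGraph fun i => Fin (m i)) (⊤ : SimpleGraph (Fin n)))
      (∑ i, (m i * n + (h - 1)) / h) := by
  classical
  set c : Fin r → ℕ := fun i => (m i * n + (h-1))/h with hc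
  set e : Fin r → ℕ := fun i => m i * n - (h-1) * c i with he
  have hce : ∀ i, (h-1) * c i ≤ m i * n := hcond
  have hch : ∀ i, m i * n ≤ h * c i := fun i => EqC.le_mul_ceil (m i * n) h (by omega)
  have hsplit : ∀ i, h * c i = (h-1)*c i + c i := by
    intro i
    have h1 : (h-1) * c i = h * c i - 1 * c i := Nat.sub_mul h 1 (c i)
    rw [one_mul] at h1
    have h2' : c i ≤ h * c i := Nat.le_mul_of_pos_left _ (by omega)
    omega
  have hec : ∀ i, e i ≤ c i := by
    intro i
    have h1 := hsplit i
    have h2' := hch i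
    have h3 := hce i
    have hedef : e i = m i * n - (h-1) * c i := rfl
    omega
  have hkey : ∀ i, m i * n = e i * h + (c i - e i) * (h-1) := by
    intro i
    have hA : e i * h = e i * (h-1) + e i := by
      have hsucc : h - 1 + 1 = h := by omega
      calc e i * h = e i * (h-1+1) := by rw [hsucc]
      _ = e i * (h-1) + e i := by rw [Nat.mul_succ]
    have hB : (c i - e i)*(h-1) = c i*(h-1) - e i*(h-1) := Nat.sub_mul _ _ _
    have hAB : e i * (h-1) ≤ c i * (h-1) := Nat.mul_le_mul_right _ (hec i)
    have hcomm : c i * (h-1) = (h-1) * c i := Nat.mul_comm _ _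
    have hedef : e i = m i * n - (h-1) * c i := rfl
    have := hce i
    omega
  set c' : ℕ → ℕ := fun x => if hx : x < r then c ⟨x,hx⟩ else 0 with hc'
  set o : ℕ → ℕ := fun x => ∑ y ∈ Finset.range x, c' y with ho
  have hc'val : ∀ i : Fin r, c' i.val = c i := by
    intro i
    simp only [hc', i.isLt, dif_pos, Fin.eta]
  have hoK : o r = ∑ i, c i := by
    have h1 : o r = ∑ y ∈ Finset.range r, c' y := rfl
    rw [h1, ← Fin.sum_univ_eq_sum_range c' r]
    exact Finset.sum_congr rfl (fun i _ => hc'val i)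
  set F : (Σ i, Fin (m i)) × Fin n → ℕ :=
    fun v => o v.1.1.val + EqC.part h (e v.1.1) (v.1.2.val * n + v.2.val) with hF
  have hFdef : ∀ v : (Σ i, Fin (m i)) × Fin n,
      F v = o v.1.1.val + EqC.part h (e v.1.1) (v.1.2.val * n + v.2.val) := fun _ => rfl
  have hrank_lt : ∀ v : (Σ i, Fin (m i)) × Fin n, v.1.2.val * n + v.2.val < m v.1.1 * n := by
    intro v
    have h1 : v.1.2.val + 1 ≤ m v.1.1 := v.1.2.isLt
    have h2 : v.2.val < n := v.2.isLt
    calc v.1.2.val * n + v.2.val < v.1.2.val * n + n := by omega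
    _ = (v.1.2.val + 1) * n := by ring
    _ ≤ m v.1.1 * n := Nat.mul_le_mul_right n h1
  have hpart_lt : ∀ v : (Σ i, Fin (m i)) × Fin n,
      EqC.part h (e v.1.1) (v.1.2.val * n + v.2.val) < c v.1.1 := by
    intro v
    have h1 := hrank_lt v
    rw [hkey v.1.1] at h1
    have := EqC.part_lt h (e v.1.1) (c v.1.1 - e v.1.1) _ h2 h1
    have := hec v.1.1
    omega
  have hFlt : ∀ v, F v < ∑ i, c i := by
    intro v
    rw [← hoK]
    have h1 := hpart_lt v
    have h2' : o v.1.1.val + c' v.1.1.val ≤ o r := EqC.o_step c' v.1.1.isLt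
    rw [hc'val] at h2'
    rw [hFdef]
    omega
  have hFkey : ∀ v w : (Σ i, Fin (m i)) × Fin n, v.1.1.val < w.1.1.val → F v < F w := by
    intro v w hlt
    have h1 := hpart_lt v
    have h2' : o v.1.1.val + c' v.1.1.val ≤ o w.1.1.val := EqC.o_step c' hlt
    rw [hc'val] at h2'
    rw [hFdef v, hFdef w]
    have h3 : 0 ≤ EqC.part h (e w.1.1) (w.1.2.val * n + w.2.val) := Nat.zero_le _
    omega
  have hFblock : ∀ v w : (Σ i, Fin (m i)) × Fin n, v.1.1 ≠ w.1.1 → F v ≠ F w := by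
    intro v w hne
    rcases Nat.lt_trichotomy v.1.1.val w.1.1.val with hlt | heq | hgt
    · exact Nat.ne_of_lt (hFkey v w hlt)
    · exact absurd (Fin.ext heq) hne
    · exact (Nat.ne_of_lt (hFkey w v hgt)).symm
  set col : SimpleGraph.Coloring
      (kronecker (completeMultipartiteGraph fun i => Fin (m i)) (⊤ : SimpleGraph (Fin n)))
      (Fin (∑ i, c i)) :=
    SimpleGraph.Coloring.mk (fun v => ⟨F v, hFlt v⟩)
      (fun {v w} hadj heq => hFblock v w hadj.1 (congrArg Fin.val heq)) with hcol
  refine ⟨col, ?_⟩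
  have hclass : ∀ t : Fin (∑ i, c i),
      h - 1 ≤ (Finset.univ.filter fun v => col v = t).card ∧
      (Finset.univ.filter fun v => col v = t).card ≤ h := by
    intro t
    have htK : t.val < o r := by rw [hoK]; exact t.isLt
    obtain ⟨x, hxr, hox0, hoxc0⟩ := EqC.exists_partial c' r t.val htK
    have hox : o x ≤ t.val := hox0
    have hoxc : t.val < o x + c' x := hoxc0
    set i : Fin r := ⟨x, hxr⟩ with hi
    have hoxi : o i.val = o x := rfl
    have hcx : c' x = c i := hc'val i
    set j' : ℕ := t.val - o x with hj'def
    have hj' : j' < c i := by omega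
    have hset : (Finset.univ.filter fun v => col v = t)
        = Finset.univ.filter (fun v => v.1.1 = i ∧
            EqC.part h (e i) (v.1.2.val * n + v.2.val) = j') := by
      ext v
      obtain ⟨⟨i1, pp⟩, qq⟩ := v
      simp only [Finset.mem_filter, Finset.mem_univ, true_and]
      have hcoe : (col ((⟨i1, pp⟩ : Σ i, Fin (m i)), qq) = t) ↔
          (F ((⟨i1, pp⟩ : Σ i, Fin (m i)), qq) = t.val) := by
        rw [Fin.ext_iff]
        exact Iff.rfl
      rw [hcoe]
      have hFv : F ((⟨i1, pp⟩ : Σ i, Fin (m i)), qq)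
          = o i1.val + EqC.part h (e i1) (pp.val * n + qq.val) := rfl
      rw [hFv]
      constructor
      · intro hEq
        have hvi : i1 = i := by
          rcases Nat.lt_trichotomy i1.val x with hlt | heqv | hgt
          · exfalso
            have h2' : o i1.val + c' i1.val ≤ o x := EqC.o_step c' hlt
            rw [hc'val] at h2'
            have hp : EqC.part h (e i1) (pp.val * n + qq.val) < c i1 :=
              hpart_lt ((⟨i1, pp⟩ : Σ i, Fin (m i)), qq)
            omega
          · exact Fin.ext heqv
          · exfalso
            have h2' : o x + c' x ≤ o i1.val := EqC.o_step c' hgt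
            have hp : 0 ≤ EqC.part h (e i1) (pp.val * n + qq.val) := Nat.zero_le _
            omega
        subst hvi
        exact ⟨rfl, by omega⟩
      · rintro ⟨hvi, hpv⟩
        subst hvi
        omega
    rw [hset]
    rw [EqC.block_card m i (fun y => EqC.part h (e i) y = j') hn]
    have hrng : Finset.range (m i * n) = Finset.range (e i * h + (c i - e i) * (h-1)) := by
      rw [← hkey i]
    rw [hrng]
    rw [EqC.part_filter_card h (e i) (c i - e i) j' h2 (by have := hec i; omega)]
    split <;> omega
  intro t1 t2
  have h1 := hclass t1
  have h2' := hclass t2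
  omega

lemma EqC.lower {r n h : ℕ} (m : Fin r → ℕ) (hm : ∀ i, 0 < m i) (hr : 0 < r)
    (hmn : (∑ i, m i) ≤ n)
    (hh : IsGreatest
      {k : ℕ | 0 < k ∧ ∀ i, (k - 1) * ((m i * n + (k - 1)) / k) ≤ m i * n} h)
    (k : ℕ)
    (hk : EquitablyColorable
      (kronecker (completeMultipartiteGraph fun i => Fin (m i)) (⊤ : SimpleGraph (Fin n))) k) :
    (∑ i, (m i * n + (h - 1)) / h) ≤ k := by
  classical
  obtain ⟨f, hf⟩ := hk
  have hM1 : 0 < ∑ i, m i :=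
    Finset.sum_pos (fun i _ => hm i) ⟨⟨0, hr⟩, Finset.mem_univ _⟩
  have hn : 0 < n := lt_of_lt_of_le hM1 hmn
  have hh1 : 0 < h := hh.1.1
  have hnh : n ≤ h := by
    refine hh.2 ⟨hn, fun i => ?_⟩
    have hdiv : (m i * n + (n-1))/n = m i := by
      rw [EqC.div_eq_iff _ n (m i) hn]
      omega
    rw [hdiv]
    calc (n-1) * m i = m i * (n-1) := Nat.mul_comm _ _
    _ ≤ m i * n := Nat.mul_le_mul_left _ (by omega)
  have hKM : (∑ i, (m i * n + (h-1))/h) ≤ ∑ i, m i := by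
    refine Finset.sum_le_sum fun i _ => ?_
    have h1 : m i * n ≤ m i * h := Nat.mul_le_mul_left _ hnh
    have h2 : (m i * n + (h-1))/((h-1)+1) ≤ m i := by
      refine EqC.ceil_le _ _ _ ?_
      rw [show (h-1)+1 = h from by omega]
      exact h1
    rwa [show (h-1)+1 = h from by omega] at h2
  have hv0 : ((Σ i, Fin (m i)) × Fin n) :=
    (⟨⟨0, hr⟩, ⟨0, hm ⟨0, hr⟩⟩⟩, ⟨0, hn⟩)
  have hk0 : 0 < k := by
    have := (f hv0).isLt
    omega
  set C : Fin k → Finset ((Σ i, Fin (m i)) × Fin n) :=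
    fun j => Finset.univ.filter (fun v => f v = j) with hC
  have hsum : ∑ j, (C j).card = (∑ i, m i) * n := by
    have h1 : (Finset.univ : Finset ((Σ i, Fin (m i)) × Fin n)).card
        = ∑ j : Fin k, (C j).card :=
      Finset.card_eq_sum_card_fiberwise (fun v _ => Finset.mem_univ (f v))
    have h2 : (Finset.univ : Finset ((Σ i, Fin (m i)) × Fin n)).card = (∑ i, m i) * n := by
      simp [Finset.card_univ]
    omega
  obtain ⟨j0, -, hj0⟩ := Finset.exists_min_image Finset.univ (fun j => (C j).card)
    ⟨f hv0, Finset.mem_univ _⟩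
  set s := (C j0).card with hs
  have hub : ∀ j, (C j).card ≤ s + 1 := fun j => hf j j0
  have hlb : ∀ j, s ≤ (C j).card := fun j => hj0 j (Finset.mem_univ j)
  have hmemC : ∀ j v, v ∈ C j ↔ f v = j := by
    intro j v
    simp [hC]
  have hvalid : ∀ j v, v ∈ C j → ∀ w, w ∈ C j → v.1.1 ≠ w.1.1 → v.2 = w.2 := by
    intro j v hv w hw hne
    by_contra hne2
    have hadj : (kronecker (completeMultipartiteGraph fun i => Fin (m i))
        (⊤ : SimpleGraph (Fin n))).Adj v w := ⟨hne, hne2⟩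
    have : f v = f w := by rw [(hmemC j v).1 hv, (hmemC j w).1 hw]
    exact f.valid hadj this
  by_cases hmix : ∃ j, ∃ v ∈ C j, ∃ w ∈ C j, v.1.1 ≠ w.1.1
  · obtain ⟨j, v, hv, w, hw, hne⟩ := hmix
    have hall : ∀ u ∈ C j, u.2 = v.2 := by
      intro u hu
      by_cases hcase : u.1.1 = v.1.1
      · have h1 : u.1.1 ≠ w.1.1 := by rw [hcase]; exact hne
        have h2 : u.2 = w.2 := hvalid j u hu w hw h1
        have h3 : v.2 = w.2 := hvalid j v hv w hw hne
        rw [h2, h3]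
      · exact hvalid j u hu v hv hcase
    have hcard : (C j).card ≤ ∑ i, m i := by
      have h1 : (C j).card ≤ (Finset.univ : Finset (Σ i, Fin (m i))).card := by
        apply Finset.card_le_card_of_injOn (fun u => u.1) (fun u _ => Finset.mem_univ _)
        intro u1 h1 u2 h2 hfst
        have e1 := hall u1 h1
        have e2 := hall u2 h2
        exact Prod.ext hfst (by rw [e1, e2])
      simpa using h1
    set M := ∑ i, m i with hM
    have hsM : s ≤ M := le_trans (hlb j) hcard
    have h1 : M * n ≤ k * (s+1) := by
      rw [← hsum]
      calc ∑ j, (C j).card ≤ ∑ _j : Fin k, (s+1) :=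
        Finset.sum_le_sum (fun j _ => hub j)
      _ = k * (s+1) := by simp [Finset.sum_const, Finset.card_univ, mul_comm]
    have hMk : M ≤ k := by
      by_contra hcon
      push_neg at hcon
      have hk1 : k + 1 ≤ M := hcon
      have c1 : M * M ≤ M * n := Nat.mul_le_mul_left M hmn
      have c3 : k * (s+1) ≤ k * (M+1) := Nat.mul_le_mul_left _ (by omega)
      have c4 : k * (M+1) + (M+1) ≤ M * (M+1) := by
        have hx : (k+1) * (M+1) ≤ M * (M+1) := Nat.mul_le_mul_right _ hk1
        have hy : k*(M+1) + (M+1) = (k+1)*(M+1) := by ring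
        omega
      have c5 : M*(M+1) = M*M + M := by ring
      omega
    exact le_trans hKM hMk
  · push_neg at hmix
    by_cases hs0 : s = 0
    · have h1 : (∑ i, m i) * n ≤ k := by
        rw [← hsum]
        calc ∑ j, (C j).card ≤ ∑ _j : Fin k, 1 :=
          Finset.sum_le_sum (fun j _ => by have := hub j; omega)
        _ = k := by simp
      have h2 : (∑ i, m i) ≤ (∑ i, m i) * n := Nat.le_mul_of_pos_right _ hn
      omega
    · have hnej : ∀ j, (C j).Nonempty := fun j => Finset.card_pos.1 (by have := hlb j; omega)
      set p : Fin k → Fin r := fun j => ((hnej j).choose).1.1 with hp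
      have hpmem : ∀ j, (hnej j).choose ∈ C j := fun j => (hnej j).choose_spec
      have hpj : ∀ j, ∀ v ∈ C j, v.1.1 = p j := fun j v hv => hmix j v hv _ (hpmem j)
      have hparts : ∀ i : Fin r,
          m i * n = ∑ j ∈ Finset.univ.filter (fun j => p j = i), (C j).card := by
        intro i
        have h1 : (Finset.univ.filter
            (fun v : (Σ i, Fin (m i)) × Fin n => v.1.1 = i)).card = m i * n := by
          have := EqC.block_card m i (fun _ => True) hn
          simpa using this
        have h2 : Finset.univ.filter (fun v : (Σ i, Fin (m i)) × Fin n => v.1.1 = i)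
            = Finset.univ.filter (fun v => p (f v) = i) := by
          ext v
          simp only [Finset.mem_filter, Finset.mem_univ, true_and]
          have hv : v.1.1 = p (f v) := hpj (f v) v ((hmemC (f v) v).2 rfl)
          rw [hv]
        have h3 : (Finset.univ.filter
              (fun v : (Σ i, Fin (m i)) × Fin n => p (f v) = i)).card
            = ∑ j ∈ Finset.univ.filter (fun j => p j = i),
              ((Finset.univ.filter
                (fun v : (Σ i, Fin (m i)) × Fin n => p (f v) = i)).filter
                  (fun v => f v = j)).card :=
          Finset.card_eq_sum_card_fiberwise (fun v hv => by
            simp only [Finset.coe_filter, Finset.mem_coe, Set.mem_setOf_eq, Finset.mem_filter, Finset.mem_univ, true_and] at hv ⊢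
            exact hv)
        have h4 : ∀ j ∈ Finset.univ.filter (fun j => p j = i),
            (Finset.univ.filter
              (fun v : (Σ i, Fin (m i)) × Fin n => p (f v) = i)).filter
                (fun v => f v = j) = C j := by
          intro j hj
          simp only [Finset.mem_filter, Finset.mem_univ, true_and] at hj
          ext v
          simp only [hC, Finset.filter_filter, Finset.mem_filter, Finset.mem_univ, true_and]
          constructor
          · rintro ⟨_, h⟩; exact h
          · intro hfv; exact ⟨by rw [hfv, hj], hfv⟩
        rw [← h1, h2, h3]
        exact Finset.sum_congr rfl (fun j hj => by rw [h4 j hj])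
      set ki : Fin r → ℕ := fun i => (Finset.univ.filter (fun j => p j = i)).card with hki
      have hkival : ∀ i, ki i = (Finset.univ.filter (fun j => p j = i)).card :=
        fun _ => rfl
      have hupper : ∀ i, m i * n ≤ ki i * (s+1) := by
        intro i
        rw [hparts i, hkival i]
        have hx := Finset.sum_le_card_nsmul (Finset.univ.filter (fun j => p j = i))
          (fun j => (C j).card) (s+1) (fun j _ => hub j)
        rw [smul_eq_mul] at hx
        exact hx
      have hlower : ∀ i, ki i * s ≤ m i * n := by
        intro i
        rw [hparts i, hkival i]
        have hx := Finset.card_nsmul_le_sum (Finset.univ.filter (fun j => p j = i))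
          (fun j => (C j).card) s (fun j _ => hlb j)
        rw [smul_eq_mul] at hx
        exact hx
      have hmem : (s+1) ∈ {k : ℕ | 0 < k ∧
          ∀ i, (k - 1) * ((m i * n + (k - 1)) / k) ≤ m i * n} := by
        refine ⟨by omega, fun i => ?_⟩
        rw [show (s+1) - 1 = s from rfl]
        have hceil : (m i * n + s)/(s+1) ≤ ki i :=
          EqC.ceil_le (m i * n) (ki i) s (hupper i)
        calc s * ((m i * n + s)/(s+1)) ≤ s * ki i := Nat.mul_le_mul_left _ hceil
        _ = ki i * s := Nat.mul_comm _ _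
        _ ≤ m i * n := hlower i
      have hsh : s + 1 ≤ h := hh.2 hmem
      have hkige : ∀ i, (m i * n + (h-1))/h ≤ ki i := by
        intro i
        calc (m i * n + (h-1))/h ≤ (m i * n + ((s+1)-1))/(s+1) :=
          EqC.ceil_anti _ (s+1) h (by omega) hsh
        _ = (m i * n + s)/(s+1) := by rw [show (s+1)-1 = s from rfl]
        _ ≤ ki i := EqC.ceil_le (m i * n) (ki i) s (hupper i)
      have hsumki : ∑ i, ki i = k := by
        have h1 : (Finset.univ : Finset (Fin k)).card
            = ∑ i ∈ Finset.univ, (Finset.univ.filter (fun j => p j = i)).card :=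
          Finset.card_eq_sum_card_fiberwise (fun j _ => Finset.mem_univ (p j))
        rw [Finset.card_univ, Fintype.card_fin] at h1
        exact h1.symm
      calc ∑ i, (m i * n + (h-1))/h ≤ ∑ i, ki i := Finset.sum_le_sum (fun i _ => hkige i)
      _ = k := hsumki

/-- Theorem 3.1: for `m = m₁ + ⋯ + m_r ≤ n` and
`h = max{k : mᵢn/(k-1) ≥ ⌈mᵢn/k⌉ for all i}`, the equitable chromatic number
of `K_{m₁,…,m_r} × Kₙ` is `∑ᵢ ⌈mᵢn/h⌉`. -/
theorem equitableChromaticNumber_kronecker {r n h : ℕ} (m : Fin r → ℕ)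
    (hm : ∀ i, 0 < m i) (hr : 0 < r) (hmn : (∑ i, m i) ≤ n)
    (hh : IsGreatest
      {k : ℕ | 0 < k ∧ ∀ i, (k - 1) * ((m i * n + (k - 1)) / k) ≤ m i * n} h) :
    equitableChromaticNumber
        (kronecker (completeMultipartiteGraph fun i => Fin (m i))
          (⊤ : SimpleGraph (Fin n))) =
      ∑ i, (m i * n + (h - 1)) / h := by
  have hM1 : 0 < ∑ i, m i :=
    Finset.sum_pos (fun i _ => hm i) ⟨⟨0, hr⟩, Finset.mem_univ _⟩
  have hn : 0 < n := lt_of_lt_of_le hM1 hmn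
  have h2 : 2 ≤ h := by
    refine hh.2 ⟨by omega, fun i => ?_⟩
    have h1 : 1 ≤ m i * n := Nat.mul_pos (hm i) hn
    simp only [show (2:ℕ) - 1 = 1 from rfl, one_mul]
    omega
  have hmemK : EquitablyColorable
      (kronecker (completeMultipartiteGraph fun i => Fin (m i)) (⊤ : SimpleGraph (Fin n)))
      (∑ i, (m i * n + (h - 1)) / h) :=
    EqC.upper m hm hn h2 hh.1.2
  have hlow : ∀ k, EquitablyColorable
      (kronecker (completeMultipartiteGraph fun i => Fin (m i)) (⊤ : SimpleGraph (Fin n))) k →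
      (∑ i, (m i * n + (h - 1)) / h) ≤ k :=
    fun k hk => EqC.lower m hm hr hmn hh k hk
  unfold equitableChromaticNumber
  exact le_antisymm (Nat.sInf_le hmemK)
    (hlow _ (Nat.sInf_mem (s := {k | EquitablyColorable (kronecker (completeMultipartiteGraph fun i => Fin (m i)) (⊤ : SimpleGraph (Fin n))) k}) ⟨_, hmemK⟩))
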